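/- For every natural number r ≥ 0, the kernel of the natural surjection F̄_{r+1} → F̄_r (i.e. the submodule J̄_r/J̄_{r+1} ⊆ F̄_{r+1}, which is well defined since J̄_{r+1} ⊆ J̄_r) equals the kernel of the endomorphism of F̄_{r+1} given by multiplication by β + (−1)^{r+1}·8. -/

import Mathlib

open MvPolynomial

/-- The pair (R̄¹_r, R̄²_r) of polynomials in ℂ[α,β] (α = X 0, β = X 1), defined by
R̄¹_0 = 1, R̄²_0 = 0 and the recursion R̄¹_{r+1} = α·R̄¹_r + r²·R̄²_r,
R̄²_{r+1} = (β + (−1)^{r+1}·8)·R̄¹_r. -/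
noncomputable def Rb : ℕ → MvPolynomial (Fin 2) ℂ × MvPolynomial (Fin 2) ℂ
  | 0 => (1, 0)
  | (r + 1) =>
      (X 0 * (Rb r).1 + C ((r : ℂ) ^ 2) * (Rb r).2,
       (X 1 + C ((-1 : ℂ) ^ (r + 1) * 8)) * (Rb r).1)

/-- The ideal J̄_r = (R̄¹_r, R̄²_r) ⊆ ℂ[α,β]. -/
noncomputable def Jb (r : ℕ) : Ideal (MvPolynomial (Fin 2) ℂ) :=
  Ideal.span {(Rb r).1, (Rb r).2}

/-- Evaluation of the second variable at `a`. -/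
noncomputable def eps (a : ℂ) : MvPolynomial (Fin 2) ℂ →ₐ[ℂ] MvPolynomial (Fin 2) ℂ :=
  aeval (fun i => if i = 1 then C a else X i)

lemma eps_X1 (a : ℂ) : eps a (X 1) = C a := by simp [eps]

lemma eps_X0 (a : ℂ) : eps a (X 0) = X 0 := by simp [eps]

lemma eps_C (a c : ℂ) : eps a (C c) = C c := by simp [eps]

lemma dvd_sub_eps (a : ℂ) (x : MvPolynomial (Fin 2) ℂ) :
    (X 1 - C a) ∣ x - eps a x := by
  induction x using MvPolynomial.induction_on with
  | C c => simp [eps_C]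
  | add p q hp hq =>
      rw [map_add]
      have hrw : p + q - (eps a p + eps a q) = (p - eps a p) + (q - eps a q) := by ring
      rw [hrw]; exact dvd_add hp hq
  | mul_X p i hp =>
      rw [map_mul]
      have hrw : p * X i - eps a p * eps a (X i)
          = (p - eps a p) * X i + eps a p * (X i - eps a (X i)) := by ring
      rw [hrw]
      refine dvd_add (hp.mul_right _) ?_
      fin_cases i
      · rw [show (⟨0, by omega⟩ : Fin 2) = 0 from rfl, eps_X0]; simp
      · rw [show (⟨1, by omega⟩ : Fin 2) = 1 from rfl, eps_X1]
        exact Dvd.dvd.mul_left dvd_rfl _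

lemma g1 (t : ℕ) : (Rb t).1 ∈ Jb t := Ideal.subset_span (Set.mem_insert _ _)

lemma g2 (t : ℕ) : (Rb t).2 ∈ Jb t :=
  Ideal.subset_span (Set.mem_insert_of_mem _ rfl)

lemma eps_Rb (a : ℂ) : ∀ s : ℕ,
    coeff (Finsupp.single 0 s) (eps a (Rb s).1) = 1 ∧
    (eps a (Rb s).1).totalDegree ≤ s ∧
    (eps a (Rb s).2).totalDegree ≤ s := by
  intro s
  induction s with
  | zero =>
      refine ⟨?_, ?_, ?_⟩ <;> simp [Rb]
  | succ s ih =>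
      obtain ⟨h1, h2, h3⟩ := ih
      have e1 : eps a (Rb (s+1)).1
          = X 0 * eps a (Rb s).1 + C ((s:ℂ)^2) * eps a (Rb s).2 := by
        show eps a (X 0 * (Rb s).1 + C ((s : ℂ) ^ 2) * (Rb s).2) = _
        rw [map_add, map_mul, map_mul, eps_X0, eps_C]
      have e2 : eps a (Rb (s+1)).2
          = C (a + (-1:ℂ)^(s+1)*8) * eps a (Rb s).1 := by
        show eps a ((X 1 + C ((-1 : ℂ) ^ (s + 1) * 8)) * (Rb s).1) = _
        rw [map_mul, map_add, eps_X1, eps_C, C_add]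
      have csum : ∑ i ∈ (Finsupp.single (0 : Fin 2) (s+1)).support,
          (Finsupp.single (0 : Fin 2) (s+1)) i = s + 1 := by
        rw [Finsupp.support_single_ne_zero _ (Nat.succ_ne_zero s)]
        simp
      refine ⟨?_, ?_, ?_⟩
      · rw [e1, coeff_add]
        have c1 : coeff (Finsupp.single 0 (s+1)) (X (0 : Fin 2) * eps a (Rb s).1) = 1 := by
          have hsd : (Finsupp.single (0 : Fin 2) (s+1))
              = Finsupp.single 0 1 + Finsupp.single 0 s := by
            rw [← Finsupp.single_add, Nat.add_comm]
          rw [hsd, coeff_X_mul]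
          exact h1
        have c2 : coeff (Finsupp.single 0 (s+1)) (C ((s:ℂ)^2) * eps a (Rb s).2) = 0 := by
          rw [coeff_C_mul, coeff_eq_zero_of_totalDegree_lt, mul_zero]
          rw [csum]; omega
        rw [c1, c2, add_zero]
      · rw [e1]
        refine le_trans (totalDegree_add _ _) (max_le ?_ ?_)
        · refine le_trans (totalDegree_mul _ _) ?_
          rw [totalDegree_X]; omega
        · refine le_trans (totalDegree_mul _ _) ?_
          rw [totalDegree_C]; omega
      · rw [e2]
        refine le_trans (totalDegree_mul _ _) ?_
        rw [totalDegree_C]; omega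

lemma key (r : ℕ) (p : MvPolynomial (Fin 2) ℂ) :
    (X 1 + C ((-1 : ℂ) ^ (r + 1) * 8)) * p ∈ Jb (r + 1) ↔ p ∈ Jb r := by
  set a : ℂ := (-1)^r * 8 with ha
  have hb : (X 1 + C ((-1 : ℂ) ^ (r + 1) * 8) : MvPolynomial (Fin 2) ℂ) = X 1 - C a := by
    have hc : ((-1 : ℂ) ^ (r + 1) * 8) = -a := by rw [ha, pow_succ]; ring
    rw [hc, map_neg, sub_eq_add_neg]
  have hR1 : (Rb (r+1)).1 = X 0 * (Rb r).1 + C ((r:ℂ)^2) * (Rb r).2 := rfl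
  have hR2 : (Rb (r+1)).2 = (X 1 + C ((-1 : ℂ) ^ (r + 1) * 8)) * (Rb r).1 := rfl
  constructor
  · intro hmem
    rw [Jb, Ideal.mem_span_pair] at hmem
    obtain ⟨u, v, huv⟩ := hmem
    rw [hR2, hb] at huv
    have e0 : eps a ((X 1 : MvPolynomial (Fin 2) ℂ) - C a) = 0 := by
      rw [map_sub, eps_X1, eps_C, sub_self]
    have h0 : eps a u * eps a ((Rb (r+1)).1) = 0 := by
      have h' := congrArg (eps a) huv
      simp only [map_add, map_mul, e0, zero_mul, mul_zero, add_zero] at h'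
      exact h'
    have hRne : eps a ((Rb (r+1)).1) ≠ 0 := by
      intro hc
      have hco := (eps_Rb a (r+1)).1
      rw [hc] at hco
      simp at hco
    have hu0 : eps a u = 0 := by
      rcases mul_eq_zero.mp h0 with h | h
      · exact h
      · exact absurd h hRne
    have hdvd : (X 1 - C a : MvPolynomial (Fin 2) ℂ) ∣ u := by
      have hd := dvd_sub_eps a u
      rwa [hu0, sub_zero] at hd
    obtain ⟨u', hu'⟩ := hdvd
    rw [hu'] at huv
    have hbne : (X 1 - C a : MvPolynomial (Fin 2) ℂ) ≠ 0 := by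
      intro hc
      have hXC : (X 1 : MvPolynomial (Fin 2) ℂ) = C a := by
        rw [← sub_eq_zero]; exact hc
      have hdeg := congrArg totalDegree hXC
      rw [totalDegree_X, totalDegree_C] at hdeg
      exact one_ne_zero hdeg
    have hp : p = u' * (Rb (r+1)).1 + v * (Rb r).1 := by
      apply mul_left_cancel₀ hbne
      rw [← huv]; ring
    rw [Jb, Ideal.mem_span_pair]
    exact ⟨u' * X 0 + v, u' * C ((r:ℂ)^2), by rw [hp, hR1]; ring⟩
  · intro hmem
    rw [Jb, Ideal.mem_span_pair] at hmem
    obtain ⟨u, v, huv⟩ := hmem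
    have hb1 : (X 1 + C ((-1 : ℂ) ^ (r + 1) * 8)) * (Rb r).1 ∈ Jb (r+1) := by
      rw [← hR2]; exact g2 (r+1)
    have hb2 : (X 1 + C ((-1 : ℂ) ^ (r + 1) * 8)) * (Rb r).2 ∈ Jb (r+1) := by
      cases r with
      | zero => simp [Rb]
      | succ s =>
        have hk : (((s:ℂ)+1)^2 : ℂ) ≠ 0 :=
          pow_ne_zero _ (Nat.cast_add_one_ne_zero s)
        have hs1 : (Rb (s+2)).1
            = X 0 * (Rb (s+1)).1 + C (((s:ℂ)+1)^2) * (Rb (s+1)).2 := by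
          show X 0 * (Rb (s+1)).1 + C (((s+1 : ℕ) : ℂ)^2) * (Rb (s+1)).2 = _
          push_cast
          ring_nf
        have hs2 : (Rb (s+2)).2
            = (X 1 + C ((-1 : ℂ) ^ (s + 1 + 1) * 8)) * (Rb (s+1)).1 := rfl
        have hid : C (((s:ℂ)+1)^2) * ((X 1 + C ((-1 : ℂ) ^ (s + 1 + 1) * 8)) * (Rb (s+1)).2)
            = (X 1 + C ((-1 : ℂ) ^ (s + 1 + 1) * 8)) * (Rb (s+2)).1 - X 0 * (Rb (s+2)).2 := by
          rw [hs1, hs2]; ring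
        have hrw : (X 1 + C ((-1 : ℂ) ^ (s + 1 + 1) * 8)) * (Rb (s+1)).2
            = C ((((s:ℂ)+1)^2)⁻¹)
              * ((X 1 + C ((-1 : ℂ) ^ (s + 1 + 1) * 8)) * (Rb (s+2)).1
                 - X 0 * (Rb (s+2)).2) := by
          rw [← hid, ← mul_assoc, ← C_mul, inv_mul_cancel₀ hk, C_1, one_mul]
        rw [hrw]
        exact Ideal.mul_mem_left _ _
          (Ideal.sub_mem _ (Ideal.mul_mem_left _ _ (g1 (s+2)))
            (Ideal.mul_mem_left _ _ (g2 (s+2))))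
    have hfin : (X 1 + C ((-1 : ℂ) ^ (r + 1) * 8)) * p
        = u * ((X 1 + C ((-1 : ℂ) ^ (r + 1) * 8)) * (Rb r).1)
          + v * ((X 1 + C ((-1 : ℂ) ^ (r + 1) * 8)) * (Rb r).2) := by
      rw [← huv]; ring
    rw [hfin]
    exact Ideal.add_mem _ (Ideal.mul_mem_left _ _ hb1) (Ideal.mul_mem_left _ _ hb2)

/-- For every r ≥ 0, the kernel of the natural surjection F̄_{r+1} → F̄_r (i.e. the submodule
J̄_r/J̄_{r+1} ⊆ F̄_{r+1}, which is well defined since J̄_{r+1} ⊆ J̄_r) equals the kernel of the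
endomorphism of F̄_{r+1} given by multiplication by β + (−1)^{r+1}·8. -/
theorem stmt6 (r : ℕ) (h : Jb (r + 1) ≤ Jb r) :
    {x : MvPolynomial (Fin 2) ℂ ⧸ Jb (r + 1) |
        Ideal.Quotient.factor h x = 0}
      = {x : MvPolynomial (Fin 2) ℂ ⧸ Jb (r + 1) |
          Ideal.Quotient.mk (Jb (r + 1)) (X 1 + C ((-1 : ℂ) ^ (r + 1) * 8)) * x = 0} ∧
    {x : MvPolynomial (Fin 2) ℂ ⧸ Jb (r + 1) |
        Ideal.Quotient.factor h x = 0}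
      = (Ideal.Quotient.mk (Jb (r + 1))) '' (Jb r) := by
  constructor
  · ext x
    obtain ⟨p, rfl⟩ := Ideal.Quotient.mk_surjective x
    simp only [Set.mem_setOf_eq, Ideal.Quotient.factor_mk, Ideal.Quotient.eq_zero_iff_mem,
      ← map_mul, key]
  · ext x
    obtain ⟨p, rfl⟩ := Ideal.Quotient.mk_surjective x
    simp only [Set.mem_setOf_eq, Ideal.Quotient.factor_mk, Ideal.Quotient.eq_zero_iff_mem,
      Set.mem_image, SetLike.mem_coe]
    constructor
    · intro hp
      exact ⟨p, hp, rfl⟩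
    · rintro ⟨q, hq, hqp⟩
      have hsub : q - p ∈ Jb (r+1) := Ideal.Quotient.eq.mp hqp
      have : p = q - (q - p) := by ring
      rw [this]
      exact Ideal.sub_mem _ hq (h hsub)
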